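/- For every s ∈ ℂ with Re(s) > 1: 𝒞(10,1;s) = (1/2)·𝒞(0,1;s) − (5/2)·𝒞(4,1;s) + (5/2)·𝒞(8,1;s); that is, Σ' cos¹⁰(θ_{p₁,p₂})/(p₁²+p₂²)^s = (1/2)·Σ' 1/(p₁²+p₂²)^s − (5/2)·Σ' cos⁴(θ_{p₁,p₂})/(p₁²+p₂²)^s + (5/2)·Σ' cos⁸(θ_{p₁,p₂})/(p₁²+p₂²)^s. -/

import Mathlib

/-- The angle `θ_{p₁,p₂} = arg(p₁ + i p₂)` of a lattice point. -/
noncomputable def latticeAngle (p : ℤ × ℤ) : ℝ :=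
  Complex.arg ((p.1 : ℂ) + (p.2 : ℂ) * Complex.I)

/-- The angular lattice sum `𝒞(n,m;s)`. -/
noncomputable def latC (n m : ℕ) (s : ℂ) : ℂ :=
  ∑' p : {p : ℤ × ℤ // p ≠ 0},
    ((Real.cos ((m : ℝ) * latticeAngle p.1) : ℂ)) ^ n /
      (((p.1.1 : ℂ)) ^ 2 + ((p.1.2 : ℂ)) ^ 2) ^ s

/-- The angular lattice sum `𝒮(n,m;s)`. -/
noncomputable def latS (n m : ℕ) (s : ℂ) : ℂ :=
  ∑' p : {p : ℤ × ℤ // p ≠ 0},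
    ((Real.sin ((m : ℝ) * latticeAngle p.1) : ℂ)) ^ n /
      (((p.1.1 : ℂ)) ^ 2 + ((p.1.2 : ℂ)) ^ 2) ^ s

namespace LatAux

abbrev T := {p : ℤ × ℤ // p ≠ 0}

noncomputable def cc (p : T) : ℂ := ((Real.cos (latticeAngle p.1) : ℝ) : ℂ)
noncomputable def ss (p : T) : ℂ := ((Real.sin (latticeAngle p.1) : ℝ) : ℂ)
noncomputable def den (s : ℂ) (p : T) : ℂ := (((p.1.1 : ℂ)) ^ 2 + ((p.1.2 : ℂ)) ^ 2) ^ s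

lemma rr_pos (p : T) : (0:ℝ) < (p.1.1:ℝ)^2 + (p.1.2:ℝ)^2 := by
  rcases p with ⟨⟨a, b⟩, hp⟩
  have : a ≠ 0 ∨ b ≠ 0 := by
    by_contra h
    push_neg at h
    exact hp (by simp [Prod.ext_iff, h.1, h.2])
  rcases this with h | h
  · have : (0:ℝ) < (a:ℝ)^2 := by positivity
    nlinarith [sq_nonneg (b:ℝ)]
  · have : (0:ℝ) < (b:ℝ)^2 := by positivity
    nlinarith [sq_nonneg (a:ℝ)]

lemma den_eq (s : ℂ) (p : T) :
    den s p = (((((p.1.1:ℝ)^2 + (p.1.2:ℝ)^2) : ℝ) : ℂ)) ^ s := by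
  unfold den; push_cast; ring_nf

lemma norm_den (s : ℂ) (p : T) :
    ‖den s p‖ = ((p.1.1:ℝ)^2 + (p.1.2:ℝ)^2) ^ s.re := by
  rw [den_eq, Complex.norm_cpow_eq_rpow_re_of_pos (rr_pos p)]

lemma summable_aux (s : ℂ) (hs : 1 < s.re) (f : T → ℂ) (hf : ∀ p, ‖f p‖ ≤ 1) :
    Summable (fun p : T => f p / den s p) := by
  have hk : (2:ℝ) < 2 * s.re := by linarith
  have h0 := EisensteinSeries.summable_one_div_norm_rpow hk
  have h1 : Summable (fun p : T => ‖(![p.1.1, p.1.2] : Fin 2 → ℤ)‖ ^ (-(2*s.re))) := by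
    apply h0.comp_injective
    intro p q h
    have h0' := congrFun h 0
    have h1' := congrFun h 1
    simp at h0' h1'
    exact Subtype.ext (Prod.ext h0' h1')
  refine h1.of_norm_bounded ?_
  intro p
  set m : ℝ := ‖(![p.1.1, p.1.2] : Fin 2 → ℤ)‖ with hmdef
  set rr : ℝ := (p.1.1:ℝ)^2 + (p.1.2:ℝ)^2 with hrr
  have hm : m = max |(p.1.1:ℝ)| |(p.1.2:ℝ)| := by
    rw [hmdef, EisensteinSeries.norm_eq_max_natAbs]
    simp [Nat.cast_max, Nat.cast_natAbs]
  have hm0 : 0 ≤ m := hm ▸ le_max_iff.mpr (Or.inl (abs_nonneg _))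
  have hm2 : m^2 ≤ rr := by
    rw [hm, hrr]
    rcases max_cases |(p.1.1:ℝ)| |(p.1.2:ℝ)| with ⟨h, _⟩ | ⟨h, _⟩ <;> rw [h, sq_abs] <;>
      nlinarith [sq_nonneg (p.1.1:ℝ), sq_nonneg (p.1.2:ℝ)]
  have hmpos : 0 < m := by
    rw [hm]
    rcases (show p.1.1 ≠ 0 ∨ p.1.2 ≠ 0 by
      by_contra h; push_neg at h; exact p.2 (by simp [Prod.ext_iff, h.1, h.2])) with h | h
    · exact lt_max_iff.mpr (Or.inl (by simpa using h))
    · exact lt_max_iff.mpr (Or.inr (by simpa using h))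
  have hrrpos : (0:ℝ) < rr := rr_pos p
  have hsre : (0:ℝ) ≤ s.re := by linarith
  have key : m ^ (-(2*s.re)) = ((m^2) ^ s.re)⁻¹ := by
    rw [Real.rpow_neg hm0, ← Real.rpow_natCast m 2, ← Real.rpow_mul hm0]
    norm_num
  calc ‖f p / den s p‖ = ‖f p‖ / rr ^ s.re := by rw [norm_div, norm_den]
    _ ≤ 1 / (m^2) ^ s.re := by
        apply div_le_div₀ zero_le_one (hf p) (Real.rpow_pos_of_pos (by positivity) _)
        exact Real.rpow_le_rpow (sq_nonneg m) hm2 hsre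
    _ = m ^ (-(2*s.re)) := by rw [key, one_div]

lemma cs_sq (p : T) : cc p ^ 2 + ss p ^ 2 = 1 := by
  unfold cc ss
  exact_mod_cast Real.cos_sq_add_sin_sq (latticeAngle p.1)

/-- Rotation by 90 degrees as an equivalence of nonzero lattice points. -/
def rot : T ≃ T where
  toFun p := ⟨(-p.1.2, p.1.1), by
    intro h
    rw [Prod.ext_iff] at h
    simp at h
    exact p.2 (by simp [Prod.ext_iff, h.1, h.2])⟩
  invFun p := ⟨(p.1.2, -p.1.1), by
    intro h
    rw [Prod.ext_iff] at h
    simp at h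
    exact p.2 (by simp [Prod.ext_iff, h.1, h.2])⟩
  left_inv p := by simp
  right_inv p := by simp

lemma z_ne_zero (p : T) : (p.1.1 : ℂ) + (p.1.2 : ℂ) * Complex.I ≠ 0 := by
  intro h
  have hre := congrArg Complex.re h
  have him := congrArg Complex.im h
  simp at hre him
  exact p.2 (by exact_mod_cast Prod.ext (by exact_mod_cast hre) (by exact_mod_cast him))

lemma cc_rot (p : T) : cc (rot p) = - ss p := by
  have hz := z_ne_zero p
  set z : ℂ := (p.1.1 : ℂ) + (p.1.2 : ℂ) * Complex.I with hzdef
  have hw : ((((rot p).1.1 : ℤ) : ℂ) + (((rot p).1.2 : ℤ) : ℂ) * Complex.I) = Complex.I * z := by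
    show (((-p.1.2 : ℤ) : ℂ) + ((p.1.1 : ℤ) : ℂ) * Complex.I) = Complex.I * z
    rw [hzdef]
    push_cast
    ring_nf
    rw [Complex.I_sq]
    ring
  unfold cc ss latticeAngle
  rw [hw]
  have hwz : Complex.I * z ≠ 0 := mul_ne_zero Complex.I_ne_zero hz
  rw [Complex.cos_arg hwz, Complex.sin_arg]
  have habs : ‖Complex.I * z‖ = ‖z‖ := by
    rw [norm_mul, Complex.norm_I, one_mul]
  have hre : (Complex.I * z).re = -z.im := by simp
  rw [habs, hre]
  push_cast
  ring

lemma den_rot (s : ℂ) (p : T) : den s (rot p) = den s p := by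
  unfold den
  congr 1
  show ((((-p.1.2 : ℤ) : ℂ)) ^ 2 + (((p.1.1 : ℤ) : ℂ)) ^ 2) = _
  push_cast
  ring

lemma key_id (a b : ℂ) (h : a^2 + b^2 = 1) :
    a^10 + b^10 = 1 - (5/2)*a^4 - (5/2)*b^4 + (5/2)*a^8 + (5/2)*b^8 := by
  linear_combination (a^8 - a^6*b^2 - (3/2)*a^6 + a^4*b^4 + (1/2)*a^4*b^2 - (3/2)*a^4
    - a^2*b^6 + (1/2)*a^2*b^4 + 2*a^2*b^2 + a^2 + b^8 - (3/2)*b^6 - (3/2)*b^4 + b^2 + 1) * h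

end LatAux

open LatAux

/-- For `Re s > 1`, `𝒞(10,1;s) = (1/2) 𝒞(0,1;s) - (5/2) 𝒞(4,1;s) + (5/2) 𝒞(8,1;s)`. -/
theorem latC_ten_one_eq (s : ℂ) (hs : 1 < s.re) :
    latC 10 1 s = (1 / 2) * latC 0 1 s - (5 / 2) * latC 4 1 s + (5 / 2) * latC 8 1 s := by
  have hu : ∀ n : ℕ, Summable (fun p : T => cc p ^ n / den s p) := by
    intro n
    apply summable_aux s hs
    intro p
    rw [norm_pow]
    apply pow_le_one₀ (norm_nonneg _)
    unfold cc
    rw [Complex.norm_real, Real.norm_eq_abs]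
    exact Real.abs_cos_le_one _
  have hv : ∀ n : ℕ, Summable (fun p : T => ss p ^ n / den s p) := by
    intro n
    apply summable_aux s hs
    intro p
    rw [norm_pow]
    apply pow_le_one₀ (norm_nonneg _)
    unfold ss
    rw [Complex.norm_real, Real.norm_eq_abs]
    exact Real.abs_sin_le_one _
  have h1 : Summable (fun p : T => (1:ℂ) / den s p) := by
    apply summable_aux s hs
    intro p; simp
  have hC : ∀ n : ℕ, latC n 1 s = ∑' p : T, cc p ^ n / den s p := by
    intro n
    unfold latC cc den
    norm_num
  have hrot : ∀ n : ℕ, Even n →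
      (∑' p : T, cc p ^ n / den s p) = ∑' p : T, ss p ^ n / den s p := by
    intro n hn
    rw [← rot.tsum_eq (f := fun p : T => cc p ^ n / den s p)]
    apply tsum_congr
    intro p
    rw [cc_rot, den_rot, hn.neg_pow]
  have hpt : ∀ p : T, cc p ^ 10 / den s p + ss p ^ 10 / den s p =
      1 / den s p - (5/2) * (cc p ^ 4 / den s p) - (5/2) * (ss p ^ 4 / den s p)
        + (5/2) * (cc p ^ 8 / den s p) + (5/2) * (ss p ^ 8 / den s p) := by
    intro p
    have h := key_id _ _ (cs_sq p)
    simp only [div_eq_mul_inv]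
    linear_combination (den s p)⁻¹ * h
  have Sa4 : Summable (fun p : T => (5/2 : ℂ) * (cc p ^ 4 / den s p)) := (hu 4).mul_left _
  have Sb4 : Summable (fun p : T => (5/2 : ℂ) * (ss p ^ 4 / den s p)) := (hv 4).mul_left _
  have Sa8 : Summable (fun p : T => (5/2 : ℂ) * (cc p ^ 8 / den s p)) := (hu 8).mul_left _
  have Sb8 : Summable (fun p : T => (5/2 : ℂ) * (ss p ^ 8 / den s p)) := (hv 8).mul_left _
  have Htot : (∑' p : T, cc p ^ 10 / den s p) + (∑' p : T, ss p ^ 10 / den s p) =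
      (∑' p : T, (1:ℂ) / den s p) - (5/2) * (∑' p : T, cc p ^ 4 / den s p)
        - (5/2) * (∑' p : T, ss p ^ 4 / den s p)
        + (5/2) * (∑' p : T, cc p ^ 8 / den s p)
        + (5/2) * (∑' p : T, ss p ^ 8 / den s p) := by
    rw [← Summable.tsum_add (hu 10) (hv 10)]
    rw [tsum_congr hpt]
    rw [Summable.tsum_add ((((h1.sub Sa4).sub Sb4).add Sa8)) Sb8,
      Summable.tsum_add (((h1.sub Sa4).sub Sb4)) Sa8,
      Summable.tsum_sub (h1.sub Sa4) Sb4, Summable.tsum_sub h1 Sa4,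
      tsum_mul_left, tsum_mul_left, tsum_mul_left, tsum_mul_left]
  have h0 : latC 0 1 s = ∑' p : T, (1:ℂ) / den s p := by
    rw [hC 0]
    exact tsum_congr fun p => by rw [pow_zero]
  rw [hC 10, hC 4, hC 8, h0]
  have e10 := hrot 10 (by decide)
  have e4 := hrot 4 (by decide)
  have e8 := hrot 8 (by decide)
  linear_combination (1/2) * Htot + (1/2) * e10 + (5/4) * e4 - (5/4) * e8
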